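/- Define η_n^{i,1} := 0 for n ≤ 1 and, for n ≥ 2 and i ∈ {0,1}, η_n^{i,1} := (1/H)(n log n − E[I_n^i log I_n^i + (n − I_n^i) log(n − I_n^i)]) + π_{1−i} ((H_{1−i} − H_i)/H) n + ((H_1 − H_0)/((p_{01}+p_{10})H)) p_{i0} p_{i1}^{n−1} n, where I_n^i is binomial B(n, p_{i0}) distributed and 0 log 0 := 0. Let ν_X^0, ν_X^1 : ℕ → ℝ be the (unique) sequences with ν_X^i(0) = ν_X^i(1) = 0 and ν_X^i(n) = E[ν_X^0(I_n^i)] + E[ν_X^1(n − I_n^i)] + η_n^{i,1} for all n ≥ 2 and i ∈ {0,1}. Then for all n ∈ ℕ: ν_X^0(n) = (1/H) n log n + ((H_1 − H_0)/((p_{01}+p_{10})H)) n · 1_{{n ≥ 2}}, and ν_X^1(n) = (1/H) n log n. -/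

import Mathlib

open Filter Asymptotics Real

/-- Expectation of `a` under the binomial distribution `B(n, p)`. -/
noncomputable def binomExp (p : ℝ) (n : ℕ) (a : ℕ → ℝ) : ℝ :=
  ∑ k ∈ Finset.range (n + 1), (n.choose k : ℝ) * p ^ k * (1 - p) ^ (n - k) * a k

lemma binomExp_congr {p : ℝ} {n : ℕ} {a b : ℕ → ℝ} (h : ∀ k ≤ n, a k = b k) :
    binomExp p n a = binomExp p n b :=
  Finset.sum_congr rfl fun k hk => by
    rw [h k (Nat.lt_succ_iff.mp (Finset.mem_range.mp hk))]

lemma binomExp_add (p : ℝ) (n : ℕ) (a b : ℕ → ℝ) :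
    binomExp p n (fun k => a k + b k) = binomExp p n a + binomExp p n b := by
  unfold binomExp
  rw [← Finset.sum_add_distrib]
  exact Finset.sum_congr rfl fun k _ => by ring

lemma binomExp_smul (p : ℝ) (n : ℕ) (r : ℝ) (a : ℕ → ℝ) :
    binomExp p n (fun k => r * a k) = r * binomExp p n a := by
  unfold binomExp
  rw [Finset.mul_sum]
  exact Finset.sum_congr rfl fun k _ => by ring

lemma binomExp_single (p : ℝ) {n m : ℕ} (hm : m ≤ n) (r : ℝ) :
    binomExp p n (fun k => if k = m then r else 0) =
      (n.choose m : ℝ) * p ^ m * (1 - p) ^ (n - m) * r := by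
  unfold binomExp
  rw [Finset.sum_eq_single_of_mem m (Finset.mem_range.mpr (Nat.lt_succ_of_le hm))]
  · simp
  · intro b _ hb; simp [hb]

lemma binomExp_id (p : ℝ) {n : ℕ} (hn : 1 ≤ n) :
    binomExp p n (fun k => (k : ℝ)) = n * p := by
  unfold binomExp
  rw [Finset.sum_range_succ']
  simp only [Nat.cast_zero, mul_zero, add_zero]
  have key : ∀ j ∈ Finset.range n,
      (n.choose (j + 1) : ℝ) * p ^ (j + 1) * (1 - p) ^ (n - (j + 1)) * ((j + 1 : ℕ) : ℝ)
        = (n : ℝ) * p * (p ^ j * (1 - p) ^ (n - 1 - j) * ((n - 1).choose j : ℝ)) := by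
    intro j hj
    have hc : n.choose (j + 1) * (j + 1) = n * (n - 1).choose j := by
      have h := Nat.add_one_mul_choose_eq (n - 1) j
      rw [Nat.sub_add_cancel hn] at h
      omega
    have hexp : n - (j + 1) = n - 1 - j := by omega
    have hc' : (n.choose (j + 1) : ℝ) * ((j + 1 : ℕ) : ℝ)
        = (n : ℝ) * ((n - 1).choose j : ℝ) := by exact_mod_cast congrArg (Nat.cast (R := ℝ)) hc
    rw [hexp]
    push_cast at hc' ⊢
    linear_combination (p ^ (j + 1) * (1 - p) ^ (n - 1 - j)) * hc'
  rw [Finset.sum_congr rfl key, ← Finset.mul_sum]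
  have hs : ∑ j ∈ Finset.range n, p ^ j * (1 - p) ^ (n - 1 - j) * ((n - 1).choose j : ℝ) = 1 := by
    have h2 := add_pow p (1 - p) (n - 1)
    rw [Nat.sub_add_cancel hn] at h2
    simpa using h2.symm
  rw [hs, mul_one]

lemma two_pow_lt {x y : ℝ} (hx : 0 < x) (hy : 0 < y) (hxy : x + y = 1) {n : ℕ} (hn : 2 ≤ n) :
    x ^ n + y ^ n < 1 := by
  have hx1 : x < 1 := by linarith
  have hy1 : y < 1 := by linarith
  have h1 : x ^ n ≤ x ^ 2 := pow_le_pow_of_le_one hx.le hx1.le hn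
  have h2 : y ^ n ≤ y ^ 2 := pow_le_pow_of_le_one hy.le hy1.le hn
  nlinarith [mul_pos hx (show (0:ℝ) < 1 - x by linarith), mul_pos hy (show (0:ℝ) < 1 - y by linarith)]

theorem stmt9 (p : Fin 2 → Fin 2 → ℝ)
    (hp : ∀ i j, p i j ∈ Set.Ioo (0 : ℝ) 1)
    (hsum : ∀ i, p i 0 + p i 1 = 1)
    (pi' H' : Fin 2 → ℝ) (H : ℝ)
    (hpi0 : pi' 0 = p 1 0 / (p 0 1 + p 1 0))
    (hpi1 : pi' 1 = p 0 1 / (p 0 1 + p 1 0))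
    (hH' : ∀ i, H' i = -(p i 0 * Real.log (p i 0)) - p i 1 * Real.log (p i 1))
    (hH : H = pi' 0 * H' 0 + pi' 1 * H' 1) (hHpos : 0 < H)
    (η : Fin 2 → ℕ → ℝ)
    (hη0 : ∀ i : Fin 2, ∀ n : ℕ, n ≤ 1 → η i n = 0)
    (hη : ∀ i : Fin 2, ∀ n : ℕ, 2 ≤ n →
      η i n = 1 / H * ((n : ℝ) * Real.log n
          - binomExp (p i 0) n
              (fun k => (k : ℝ) * Real.log k + ((n - k : ℕ) : ℝ) * Real.log ((n - k : ℕ) : ℝ)))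
        + pi' (1 - i) * ((H' (1 - i) - H' i) / H) * n
        + (H' 1 - H' 0) / ((p 0 1 + p 1 0) * H) * p i 0 * p i 1 ^ (n - 1) * n)
    (νX : Fin 2 → ℕ → ℝ)
    (hinit : ∀ i : Fin 2, νX i 0 = 0 ∧ νX i 1 = 0)
    (hrec : ∀ i : Fin 2, ∀ n : ℕ, 2 ≤ n →
      νX i n = binomExp (p i 0) n (νX 0) + binomExp (p i 0) n (fun k => νX 1 (n - k)) + η i n) :
    ∀ n : ℕ,
      νX 0 n = 1 / H * ((n : ℝ) * Real.log n)
          + (H' 1 - H' 0) / ((p 0 1 + p 1 0) * H) * n * (if 2 ≤ n then (1 : ℝ) else 0) ∧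
      νX 1 n = 1 / H * ((n : ℝ) * Real.log n) := by
  have h00 := hp 0 0; have h01 := hp 0 1; have h10 := hp 1 0; have h11 := hp 1 1
  have hq : 0 < p 0 1 + p 1 0 := by linarith [h01.1, h10.1]
  have hHne : H ≠ 0 := ne_of_gt hHpos
  set c : ℝ := (H' 1 - H' 0) / ((p 0 1 + p 1 0) * H) with hc
  set F : Fin 2 → ℕ → ℝ :=
    fun i n => 1 / H * ((n : ℝ) * Real.log n)
      + (if i = 0 then c * n * (if 2 ≤ n then (1 : ℝ) else 0) else 0) with hF
  have hp1 : ∀ i, 1 - p i 0 = p i 1 := fun i => by have := hsum i; linarith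
  -- the closed form satisfies the recursion
  have key : ∀ i : Fin 2, ∀ n : ℕ, 2 ≤ n →
      binomExp (p i 0) n (F 0) + binomExp (p i 0) n (fun k => F 1 (n - k)) + η i n = F i n := by
    intro i n hn
    have hn1 : 1 ≤ n := by omega
    have hF0 : ∀ k ≤ n, F 0 k = 1 / H * ((k : ℝ) * Real.log k) + c * (k : ℝ)
        + (if k = 1 then -c else 0) := by
      intro k _
      simp only [hF]
      rcases k with _ | _ | k
      · norm_num
      · norm_num
      · have h2k : 2 ≤ k + 2 := by omega
        have hne1 : k + 2 ≠ 1 := by omega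
        simp [h2k, hne1]
    have hA : binomExp (p i 0) n (F 0) = 1 / H * binomExp (p i 0) n (fun k => (k : ℝ) * Real.log k)
        + c * ((n : ℝ) * p i 0) + (n : ℝ) * p i 0 * (1 - p i 0) ^ (n - 1) * (-c) := by
      rw [binomExp_congr hF0, binomExp_add, binomExp_add, binomExp_smul, binomExp_smul,
        binomExp_id _ hn1, binomExp_single _ hn1 (-c)]
      simp [Nat.choose_one_right]
    have hB : binomExp (p i 0) n (fun k => F 1 (n - k))
        = 1 / H * binomExp (p i 0) n (fun k => ((n - k : ℕ) : ℝ) * Real.log ((n - k : ℕ) : ℝ)) := by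
      rw [binomExp_congr (b := fun k => 1 / H * (((n - k : ℕ) : ℝ) * Real.log ((n - k : ℕ) : ℝ)))
        (fun k _ => by simp [hF]), binomExp_smul]
    rw [hA, hB, hη i n hn, binomExp_add, hp1 i]
    have hi : i = 0 ∨ i = 1 := by fin_cases i; exacts [Or.inl rfl, Or.inr rfl]
    rcases hi with rfl | rfl
    · rw [show ((1 : Fin 2) - 0) = 1 from rfl, hpi1]
      have hFv : F 0 n = 1 / H * ((n : ℝ) * Real.log n) + c * n := by simp [hF, hn]
      rw [hFv]
      have hcc : c * p 0 0 + p 0 1 / (p 0 1 + p 1 0) * ((H' 1 - H' 0) / H) = c := by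
        rw [hc]
        have h1 := hsum 0
        field_simp
        linear_combination (H' 1 - H' 0) * h1
      linear_combination (n : ℝ) * hcc
    · rw [show ((1 : Fin 2) - 1) = 0 from rfl, hpi0]
      have hFv : F 1 n = 1 / H * ((n : ℝ) * Real.log n) := by simp [hF]
      rw [hFv]
      have hcc : c * p 1 0 + p 1 0 / (p 0 1 + p 1 0) * ((H' 0 - H' 1) / H) = 0 := by
        rw [hc]; field_simp; ring
      linear_combination (n : ℝ) * hcc
  have main : ∀ n : ℕ, νX 0 n = F 0 n ∧ νX 1 n = F 1 n := by
    intro n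
    induction n using Nat.strong_induction_on with
    | _ n ih =>
      rcases lt_or_ge n 2 with h2 | h2
      · interval_cases n
        · constructor <;> simp [hF, (hinit 0).1, (hinit 1).1]
        · constructor <;> simp [hF, (hinit 0).2, (hinit 1).2]
      · set u : ℝ := νX 0 n - F 0 n with hu
        set v : ℝ := νX 1 n - F 1 n with hv
        have hdec : ∀ i : Fin 2, νX i n = F i n + (p i 0) ^ n * u + (1 - p i 0) ^ n * v := by
          intro i
          rw [hrec i n h2]
          have h1 : binomExp (p i 0) n (νX 0)
              = binomExp (p i 0) n (F 0) + (p i 0) ^ n * u := by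
            have hcg : ∀ k ≤ n, νX 0 k = F 0 k + (if k = n then u else 0) := by
              intro k hk
              rcases eq_or_lt_of_le hk with rfl | hk'
              · rw [if_pos rfl, hu]; ring
              · rw [if_neg (Nat.ne_of_lt hk'), (ih k hk').1, add_zero]
            rw [binomExp_congr hcg, binomExp_add, binomExp_single _ (le_refl n) u]
            simp [Nat.choose_self]
          have h2' : binomExp (p i 0) n (fun k => νX 1 (n - k))
              = binomExp (p i 0) n (fun k => F 1 (n - k)) + (1 - p i 0) ^ n * v := by
            have hcg : ∀ k ≤ n, νX 1 (n - k) = F 1 (n - k) + (if k = 0 then v else 0) := by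
              intro k hk
              rcases Nat.eq_zero_or_pos k with rfl | hk'
              · rw [if_pos rfl, Nat.sub_zero, hv]; ring
              · rw [if_neg (by omega), (ih (n - k) (by omega)).2, add_zero]
            rw [binomExp_congr hcg, binomExp_add, binomExp_single _ (Nat.zero_le n) v]
            simp
          rw [h1, h2']
          linear_combination key i n h2
        have e0 := hdec 0
        have e1' := hdec 1
        rw [hp1 0] at e0; rw [hp1 1] at e1'
        have eq0 : u = (p 0 0) ^ n * u + (p 0 1) ^ n * v := by linear_combination e0 + hu
        have eq1 : v = (p 1 0) ^ n * u + (p 1 1) ^ n * v := by linear_combination e1' + hv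
        have hab : (p 0 0) ^ n + (p 0 1) ^ n < 1 := two_pow_lt h00.1 h01.1 (hsum 0) h2
        have hcd : (p 1 0) ^ n + (p 1 1) ^ n < 1 := two_pow_lt h10.1 h11.1 (hsum 1) h2
        have hbpos : 0 < (p 0 1) ^ n := pow_pos h01.1 n
        have hc2pos : 0 < (p 1 0) ^ n := pow_pos h10.1 n
        have h3 : u * ((1 - (p 0 0) ^ n) * (1 - (p 1 1) ^ n) - (p 0 1) ^ n * (p 1 0) ^ n) = 0 := by
          linear_combination (1 - (p 1 1) ^ n) * eq0 + (p 0 1) ^ n * eq1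
        have hpos : 0 < (1 - (p 0 0) ^ n) * (1 - (p 1 1) ^ n) - (p 0 1) ^ n * (p 1 0) ^ n := by
          have h1a : (p 0 1) ^ n < 1 - (p 0 0) ^ n := by linarith
          have h1d : (p 1 0) ^ n < 1 - (p 1 1) ^ n := by linarith
          nlinarith
        have hu0 : u = 0 := by
          rcases mul_eq_zero.mp h3 with h | h
          · exact h
          · linarith
        have hv0 : v = 0 := by
          have h4 : v * (1 - (p 1 1) ^ n) = 0 := by
            rw [hu0] at eq1; linear_combination eq1
          have h5 : (p 1 1) ^ n < 1 := by linarith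
          rcases mul_eq_zero.mp h4 with h | h
          · exact h
          · linarith
        constructor
        · linear_combination hu0 - hu
        · linear_combination hv0 - hv
  intro n
  refine ⟨?_, ?_⟩
  · rw [(main n).1]; simp [hF]
  · rw [(main n).2]; simp [hF]
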